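/- For ν > 0, d > 0, n ∈ ℕ, and t > 0, the function M(t) = (d^ν t^ν)^n E_{ν, νn+1}(-d^ν t^ν) satisfies M(t) + d^ν (₀D_t^{-ν} M)(t) = (d^ν t^ν)^n / Γ(νn + 1). -/

import Mathlib

open MeasureTheory intervalIntegral
open Nat

/-- Riemann–Liouville fractional integral of order ν. -/
noncomputable def rlInt (ν : ℝ) (f : ℝ → ℝ) (t : ℝ) : ℝ :=
  (1 / Real.Gamma ν) * ∫ s in (0 : ℝ)..t, (t - s) ^ (ν - 1) * f s

/-- Two-parameter Mittag-Leffler function `E_{α,β}(x) = Σ_{r} x^r / Γ(αr + β)`. -/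
noncomputable def mittagLeffler (α β x : ℝ) : ℝ :=
  ∑' r : ℕ, x ^ r / Real.Gamma (α * r + β)


lemma betaIntegrableAux {ν μ t : ℝ} (hν : 0 < ν) (hμ : 0 ≤ μ) (ht : 0 < t) :
    IntervalIntegrable (fun s => (t - s) ^ (ν - 1) * s ^ μ) volume 0 t := by
  have h1 : IntervalIntegrable (fun s : ℝ => (t - s) ^ (ν - 1)) volume 0 t := by
    have := (intervalIntegral.intervalIntegrable_rpow' (a := 0) (b := t) (r := ν - 1)
      (by linarith)).comp_sub_left t
    simpa using this.symm
  refine h1.mul_continuousOn ?_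
  exact (continuousOn_id.rpow_const fun x _ => Or.inr hμ)

lemma betaValAux {ν μ t : ℝ} (hν : 0 < ν) (hμ : 0 ≤ μ) (ht : 0 < t) :
    ∫ s in (0:ℝ)..t, (t - s) ^ (ν - 1) * s ^ μ
      = Real.Gamma ν * Real.Gamma (μ + 1) / Real.Gamma (ν + μ + 1) * t ^ (ν + μ) := by
  have hkey := Complex.betaIntegral_scaled ((μ : ℂ) + 1) (ν : ℂ) ht
  have hGpos : 0 < Real.Gamma (ν + μ + 1) := Real.Gamma_pos_of_pos (by linarith)
  have hB : Complex.betaIntegral ((μ : ℂ) + 1) (ν : ℂ)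
      = ((Real.Gamma (μ + 1) * Real.Gamma ν / Real.Gamma (ν + μ + 1) : ℝ) : ℂ) := by
    have h2 := Complex.Gamma_mul_Gamma_eq_betaIntegral
      (s := (μ : ℂ) + 1) (t := (ν : ℂ)) (by simp; linarith) (by simpa using hν)
    have h3 : (μ : ℂ) + 1 + ν = ((ν + μ + 1 : ℝ) : ℂ) := by push_cast; ring
    have h4 : (μ : ℂ) + 1 = ((μ + 1 : ℝ) : ℂ) := by push_cast; ring
    rw [h3, h4, Complex.Gamma_ofReal, Complex.Gamma_ofReal, Complex.Gamma_ofReal] at h2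
    have h5 : ((Real.Gamma (ν + μ + 1) : ℂ)) ≠ 0 := by
      simpa using hGpos.ne'
    rw [h4, Complex.ofReal_div, Complex.ofReal_mul, eq_div_iff h5]
    linear_combination h2.symm
  have hL : (∫ x in (0:ℝ)..t, (x : ℂ) ^ ((μ : ℂ) + 1 - 1) * ((t : ℂ) - x) ^ ((ν : ℂ) - 1))
      = ((∫ s in (0:ℝ)..t, (t - s) ^ (ν - 1) * s ^ μ : ℝ) : ℂ) := by
    rw [← intervalIntegral.integral_ofReal]
    refine intervalIntegral.integral_congr fun s hs => ?_
    rw [Set.uIcc_of_le ht.le] at hs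
    have h0s : (0:ℝ) ≤ s := hs.1
    have hst : (0:ℝ) ≤ t - s := by linarith [hs.2]
    rw [Complex.ofReal_mul, Complex.ofReal_cpow hst, Complex.ofReal_cpow h0s]
    push_cast
    ring
  rw [hL, hB] at hkey
  have hR : ((t : ℂ)) ^ ((μ : ℂ) + 1 + ν - 1) = ((t ^ (ν + μ) : ℝ) : ℂ) := by
    rw [Complex.ofReal_cpow ht.le]
    push_cast
    ring_nf
  rw [hR, ← Complex.ofReal_mul] at hkey
  rw [Complex.ofReal_inj.mp hkey]
  ring

lemma summable_ml {ν c : ℝ} (hν : 0 < ν) (hc : 0 < c) (y : ℝ) :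
    Summable (fun r : ℕ => y ^ r / Real.Gamma (ν * r + c)) := by
  have hGpos : ∀ r : ℕ, 0 < Real.Gamma (ν * r + c) := fun r =>
    Real.Gamma_pos_of_pos (by positivity)
  -- reduce to absolute values
  refine Summable.of_abs ?_
  have heq : (fun r : ℕ => |y ^ r / Real.Gamma (ν * r + c)|)
      = fun r : ℕ => |y| ^ r / Real.Gamma (ν * r + c) := by
    funext r; rw [abs_div, abs_pow, abs_of_pos (hGpos r)]
  rw [heq]
  set K : ℝ := max ((2 * |y|) ^ (2 / ν)) 1 with hKdef
  have hK1 : (1 : ℝ) ≤ K := le_max_right _ _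
  have hK0 : (0 : ℝ) ≤ K := by linarith
  -- eventually K ^ q ≤ q !
  have hfact : ∀ᶠ (q : ℕ) in Filter.atTop, K ^ q ≤ (q ! : ℝ) := by
    have h := (Real.summable_pow_div_factorial K).tendsto_atTop_zero
    have h2 := h.eventually_lt_const (by norm_num : (0:ℝ) < 1)
    filter_upwards [h2] with q hq
    have hq' : K ^ q / (q ! : ℝ) ≤ 1 := hq.le
    have hfq : (0:ℝ) < (q ! : ℝ) := by exact_mod_cast q.factorial_pos
    calc K ^ q = K ^ q / (q ! : ℝ) * (q ! : ℝ) := by field_simp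
    _ ≤ 1 * (q ! : ℝ) := by nlinarith [pow_nonneg hK0 q]
    _ = (q ! : ℝ) := one_mul _
  obtain ⟨Q, hQ⟩ := hfact.exists_forall_of_atTop
  -- choose R
  obtain ⟨R, hR⟩ := Filter.Eventually.exists_forall_of_atTop
    (Filter.Tendsto.eventually_ge_atTop
      ((tendsto_natCast_atTop_atTop (R := ℝ)).const_mul_atTop hν) ((Q : ℝ) + 6))
  -- main bound for r ≥ R
  have key : ∀ r : ℕ, R ≤ r → |y| ^ r / Real.Gamma (ν * r + c) ≤ (1/2) ^ r := by
    intro r hr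
    have hνr : (Q : ℝ) + 6 ≤ ν * r := hR r hr
    set x := ν * r + c with hx
    have hx2 : (2:ℝ) ≤ x := by simp only [hx]; push_cast; linarith
    have hm2 : 2 ≤ ⌊x⌋₊ := Nat.le_floor (by exact_mod_cast hx2)
    obtain ⟨k, hk⟩ : ∃ k, ⌊x⌋₊ = k + 2 := ⟨⌊x⌋₊ - 2, by omega⟩
    have hmx : ((k + 2 : ℕ) : ℝ) ≤ x := hk ▸ Nat.floor_le (by linarith)
    have hxm : x - 1 < ((k + 2 : ℕ) : ℝ) := hk ▸ Nat.sub_one_lt_floor x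
    have hΓ : ((k + 1)! : ℝ) ≤ Real.Gamma x := by
      have hmono := Real.Gamma_strictMonoOn_Ici.monotoneOn
      have h1 : ((k + 2 : ℕ) : ℝ) ∈ Set.Ici (2:ℝ) := by
        simp only [Set.mem_Ici]; push_cast; linarith
      have h2 : x ∈ Set.Ici (2:ℝ) := by simp only [Set.mem_Ici]; linarith
      have := hmono h1 h2 (by exact_mod_cast hmx)
      rwa [show ((k+2:ℕ):ℝ) = ((k+1:ℕ):ℝ) + 1 by push_cast; ring,
        Real.Gamma_nat_eq_factorial] at this
    -- (2|y|)^r ≤ (k+1)!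
    have hq : Q ≤ k + 1 := by
      have : (Q:ℝ) ≤ (k+1:ℕ) := by push_cast; push_cast at hxm; nlinarith [hc]
      exact_mod_cast this
    have hKq : K ^ (k+1) ≤ ((k+1)! : ℝ) := hQ (k+1) hq
    have h2y : (2 * |y|) ^ r ≤ ((k+1)! : ℝ) := by
      rcases le_or_gt (2 * |y|) 1 with hy1 | hy1
      · calc (2*|y|)^r ≤ 1^r := pow_le_pow_left₀ (by positivity) hy1 r
          _ = 1 := one_pow r
          _ ≤ ((k+1)!:ℝ) := by exact_mod_cast Nat.one_le_iff_ne_zero.mpr (k+1).factorial_ne_zero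
      · have hbase : (0:ℝ) < 2 * |y| := by linarith
        have e1 : (2*|y|)^r = ((2*|y|) ^ (2/ν)) ^ (ν * r / 2) := by
          rw [← Real.rpow_natCast (2*|y|) r, ← Real.rpow_mul hbase.le]
          congr 1
          field_simp
        have e2 : ((2*|y|) ^ (2/ν)) ^ (ν * r / 2) ≤ K ^ (ν * r / 2) :=
          Real.rpow_le_rpow (Real.rpow_nonneg hbase.le _) (le_max_left _ _) (by positivity)
        have hexp : ν * r / 2 ≤ ((k+1:ℕ):ℝ) := by push_cast; push_cast at hxm; nlinarith [hc]
        have e3 : K ^ (ν * r / 2) ≤ K ^ (((k+1:ℕ)):ℝ) :=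
          Real.rpow_le_rpow_of_exponent_le hK1 hexp
        calc (2*|y|)^r = ((2*|y|) ^ (2/ν)) ^ (ν * r / 2) := e1
          _ ≤ K ^ (((k+1:ℕ)):ℝ) := e2.trans e3
          _ = K ^ (k+1) := by rw [Real.rpow_natCast]
          _ ≤ ((k+1)!:ℝ) := hKq
    -- conclude
    rw [div_le_iff₀ (hGpos r)]
    have : |y| ^ r * 2 ^ r ≤ Real.Gamma x := by
      calc |y|^r * 2^r = (2*|y|)^r := by rw [mul_pow]; ring
        _ ≤ ((k+1)!:ℝ) := h2y
        _ ≤ Real.Gamma x := hΓ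
    calc |y| ^ r = (1/2)^r * (|y|^r * 2^r) := by
          rw [mul_comm (|y|^r), ← mul_assoc, ← mul_pow]; norm_num
      _ ≤ (1/2)^r * Real.Gamma x := by
          exact mul_le_mul_of_nonneg_left this (by positivity)
    
  rw [← summable_nat_add_iff R]
  refine Summable.of_nonneg_of_le (fun n => by positivity) (fun n => ?_)
    (summable_geometric_of_lt_one (by norm_num) (by norm_num : (1/2:ℝ) < 1))
  have h1 := key (n + R) (Nat.le_add_left R n)
  have h2 : ((1:ℝ)/2) ^ (n + R) ≤ (1/2) ^ n :=
    pow_le_pow_of_le_one (by norm_num) (by norm_num) (Nat.le_add_right n R)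
  exact h1.trans h2

theorem scaled_mittagLeffler_solves (ν d : ℝ) (hν : 0 < ν) (hd : 0 < d) (n : ℕ)
    (t : ℝ) (ht : 0 < t) :
    (d ^ ν * t ^ ν) ^ n * mittagLeffler ν (ν * n + 1) (-(d ^ ν * t ^ ν)) +
      d ^ ν *
        rlInt ν (fun s => (d ^ ν * s ^ ν) ^ n * mittagLeffler ν (ν * n + 1) (-(d ^ ν * s ^ ν))) t
    = (d ^ ν * t ^ ν) ^ n / Real.Gamma (ν * n + 1) := by
  set a : ℝ := d ^ ν with ha
  have hA : 0 < a := Real.rpow_pos_of_pos hd ν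
  -- exponents
  set μ : ℕ → ℝ := fun r => ν * ((n + r : ℕ) : ℝ) with hμdef
  have hμ0 : ∀ r, 0 ≤ μ r := fun r => by positivity
  have hΓμpos : ∀ r, 0 < Real.Gamma (μ r + 1) := fun r => Real.Gamma_pos_of_pos (by positivity)
  set g : ℕ → ℝ := fun r => (-a) ^ r * a ^ n / Real.Gamma (μ r + 1) with hg
  -- series representation
  have L1 : ∀ s : ℝ, 0 ≤ s →
      (a * s ^ ν) ^ n * mittagLeffler ν (ν * n + 1) (-(a * s ^ ν))
        = ∑' r : ℕ, g r * s ^ μ r := by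
    intro s hs
    rw [mittagLeffler, ← tsum_mul_left]
    congr 1
    funext r
    have hpow : s ^ μ r = (s ^ ν) ^ (n + r) := by
      rw [hμdef, Real.rpow_mul hs, Real.rpow_natCast]
    have hΓ : ν * r + (ν * n + 1) = μ r + 1 := by simp only [hμdef]; push_cast; ring
    rw [hΓ, hpow, hg]
    have hGne : Real.Gamma (μ r + 1) ≠ 0 := (hΓμpos r).ne'
    field_simp
    ring
  -- the integrand family
  set F : ℕ → ℝ → ℝ := fun r s => g r * ((t - s) ^ (ν - 1) * s ^ μ r) with hF
  have hFint : ∀ r, IntegrableOn (F r) (Set.Ioc 0 t) volume := by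
    intro r
    have := (betaIntegrableAux hν (hμ0 r) ht (μ := μ r)).const_mul (g r)
    exact (intervalIntegrable_iff_integrableOn_Ioc_of_le ht.le).mp this
  -- value of each integral
  have hFval : ∀ r, ∫ s in Set.Ioc (0:ℝ) t, F r s
      = g r * (Real.Gamma ν * Real.Gamma (μ r + 1) / Real.Gamma (ν + μ r + 1) * t ^ (ν + μ r)) := by
    intro r
    rw [MeasureTheory.integral_const_mul, ← intervalIntegral.integral_of_le ht.le,
      betaValAux hν (hμ0 r) ht]
  -- norms of integrals
  have hFnorm : ∀ r, (∫ s in Set.Ioc (0:ℝ) t, ‖F r s‖)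
      = |g r| * (Real.Gamma ν * Real.Gamma (μ r + 1) / Real.Gamma (ν + μ r + 1) * t ^ (ν + μ r)) := by
    intro r
    have h1 : ∀ s ∈ Set.Ioc (0:ℝ) t, ‖F r s‖ = |g r| * ((t - s) ^ (ν - 1) * s ^ μ r) := by
      intro s hs
      rw [hF]
      simp only [Real.norm_eq_abs, abs_mul]
      rw [abs_of_nonneg (Real.rpow_nonneg (by linarith [hs.2] : (0:ℝ) ≤ t - s) _),
        abs_of_nonneg (Real.rpow_nonneg hs.1.le _)]
    rw [MeasureTheory.setIntegral_congr_fun measurableSet_Ioc h1,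
      MeasureTheory.integral_const_mul, ← intervalIntegral.integral_of_le ht.le,
      betaValAux hν (hμ0 r) ht]
  -- summability of the norms
  have hc1 : (0:ℝ) < ν * n + ν + 1 := by positivity
  have hsumnorm : Summable fun r => ∫ s in Set.Ioc (0:ℝ) t, ‖F r s‖ := by
    have base := (summable_ml hν hc1 (a * t ^ ν)).mul_left
      (Real.Gamma ν * (a ^ n * t ^ (ν * n + ν)))
    refine base.congr fun r => ?_
    rw [hFnorm r]
    have e1 : t ^ (ν + μ r) = t ^ (ν * n + ν) * (t ^ ν) ^ r := by
      rw [hμdef]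
      push_cast
      rw [show ν + ν * ((n:ℝ) + r) = (ν * n + ν) + ν * r by ring, Real.rpow_add ht,
        Real.rpow_mul ht.le, Real.rpow_natCast]
    have e2 : |g r| = a ^ r * a ^ n / Real.Gamma (μ r + 1) := by
      simp only [hg, abs_div, abs_mul, abs_pow, abs_neg, abs_of_pos hA,
        abs_of_pos (hΓμpos r)]
    have hΓ2 : Real.Gamma (ν + μ r + 1) = Real.Gamma (ν * r + (ν * n + ν + 1)) := by
      congr 1; rw [hμdef]; push_cast; ring
    rw [e2, e1, hΓ2, mul_pow]
    have hne1 : Real.Gamma (μ r + 1) ≠ 0 := (hΓμpos r).ne'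
    have hne2 : Real.Gamma (ν * r + (ν * n + ν + 1)) ≠ 0 :=
      (Real.Gamma_pos_of_pos (by positivity)).ne'
    field_simp
  -- interchange
  have hInter : (∫ s in (0:ℝ)..t, (t - s) ^ (ν - 1) *
        ((a * s ^ ν) ^ n * mittagLeffler ν (ν * n + 1) (-(a * s ^ ν))))
      = ∑' r : ℕ, ∫ s in Set.Ioc (0:ℝ) t, F r s := by
    rw [intervalIntegral.integral_of_le ht.le]
    rw [MeasureTheory.setIntegral_congr_fun measurableSet_Ioc
      (g := fun s => ∑' r : ℕ, F r s) (fun s hs => by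
        rw [L1 s hs.1.le, ← tsum_mul_left]
        exact tsum_congr fun r => by rw [hF]; ring)]
    exact (MeasureTheory.integral_tsum_of_summable_integral_norm hFint hsumnorm).symm
  -- the shifted sequence
  set h : ℕ → ℝ := fun r => g r * t ^ μ r with hh
  have hsumh : Summable h := by
    refine ((summable_ml hν (show (0:ℝ) < ν * n + 1 by positivity) (-(a * t ^ ν))).mul_left
      (a ^ n * t ^ (ν * (n:ℝ)))).congr fun r => ?_
    simp only [hh, hg]
    have e1 : t ^ μ r = t ^ (ν * (n:ℝ)) * (t ^ ν) ^ r := by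
      have e0 : μ r = ν * (n:ℝ) + ν * r := by rw [hμdef]; push_cast; ring
      rw [e0, Real.rpow_add ht]
      congr 1
      rw [← Real.rpow_natCast (t ^ ν) r, ← Real.rpow_mul ht.le]
    have hΓ : Real.Gamma (ν * r + (ν * n + 1)) = Real.Gamma (μ r + 1) := by
      congr 1; rw [hμdef]; push_cast; ring
    rw [e1, hΓ]
    have hne : Real.Gamma (μ r + 1) ≠ 0 := (hΓμpos r).ne'
    field_simp
    ring
  -- rewrite the fractional integral
  have hΓνpos : 0 < Real.Gamma ν := Real.Gamma_pos_of_pos hν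
  have hrl : rlInt ν (fun s => (a * s ^ ν) ^ n * mittagLeffler ν (ν * n + 1) (-(a * s ^ ν))) t
      = (1 / Real.Gamma ν) * ∑' r : ℕ, ∫ s in Set.Ioc (0:ℝ) t, F r s := by
    rw [rlInt, hInter]
  have hstep : a * rlInt ν
        (fun s => (a * s ^ ν) ^ n * mittagLeffler ν (ν * n + 1) (-(a * s ^ ν))) t
      = -∑' r : ℕ, h (r + 1) := by
    rw [hrl]
    calc a * ((1 / Real.Gamma ν) * ∑' r : ℕ, ∫ s in Set.Ioc (0:ℝ) t, F r s)
        = ∑' r : ℕ, a * ((1 / Real.Gamma ν) * ∫ s in Set.Ioc (0:ℝ) t, F r s) := by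
          rw [tsum_mul_left, tsum_mul_left]
      _ = ∑' r : ℕ, -(h (r + 1)) := by
          refine tsum_congr fun r => ?_
          rw [hFval r]
          simp only [hh, hg]
          have hΓ : Real.Gamma (ν + μ r + 1) = Real.Gamma (μ (r + 1) + 1) := by
            congr 1; rw [hμdef]; push_cast; ring
          have hex : t ^ (ν + μ r) = t ^ μ (r + 1) := by
            congr 1; rw [hμdef]; push_cast; ring
          rw [hΓ, hex]
          have h1 : Real.Gamma (μ r + 1) ≠ 0 := (hΓμpos r).ne'
          have h2 : Real.Gamma (μ (r + 1) + 1) ≠ 0 := (hΓμpos (r + 1)).ne'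
          field_simp
          ring
      _ = -∑' r : ℕ, h (r + 1) := tsum_neg
  rw [L1 t ht.le, hstep, Summable.tsum_eq_zero_add hsumh]
  have h0 : h 0 = (a * t ^ ν) ^ n / Real.Gamma (ν * n + 1) := by
    simp only [hh, hg]
    have e1 : μ 0 = ν * (n : ℝ) := by rw [hμdef]; push_cast; ring
    rw [e1, mul_pow, ← Real.rpow_natCast (t ^ ν) n, ← Real.rpow_mul ht.le]
    simp only [pow_zero, one_mul]
    ring
  rw [h0]
  ring
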